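/- (Proposition 4.9 — limit of the hitting probability from a fixed starting point, expressed via the scale function.) For all 0 < x < z one has lim_{ε→0⁺} ( ∫_x^z g_ε(y) dy ) / ( ∫_ε^z g_ε(y) dy ) = ( ∫_x^z exp(−∫_y^z b₂(l)/σ(l)² dl) dy ) / ( ∫_0^z exp(−∫_y^z b₂(l)/σ(l)² dl) dy ). The left-hand ratio equals the probability that the diffusion started at x hits level ε before level z. -/

import Mathlib

open MeasureTheory Real Set Filter
open intervalIntegral
open scoped Topology

/-- Continuity on `Ioc 0 z` of `y ↦ ∫_y^z h`. -/
private lemma aux_primitive_cont {h : ℝ → ℝ} {z : ℝ} (hz : 0 < z)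
    (hh : ∀ l : ℝ, 0 < l → ContinuousAt h l) :
    ContinuousOn (fun y => ∫ l in y..z, h l) (Ioc 0 z) := by
  intro y0 hy0
  set t := y0 / 2 with ht
  have ht0 : 0 < t := by have := hy0.1; positivity
  have hty0 : t < y0 := by have := hy0.1; simp only [ht]; linarith
  have htz : t ≤ z := by have := hy0.2; linarith
  have hcont : ContinuousOn h (Icc t z) := fun l hl =>
    (hh l (lt_of_lt_of_le ht0 hl.1)).continuousWithinAt
  have hint : IntegrableOn h (uIcc t z) := by
    rw [uIcc_of_le htz]; exact hcont.integrableOn_compact isCompact_Icc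
  have hprim : ContinuousOn (fun y => ∫ l in y..z, h l) (Icc t z) := by
    have := intervalIntegral.continuousOn_primitive_interval_left (μ := volume) hint
    rwa [uIcc_of_le htz] at this
  refine (hprim y0 ⟨hty0.le, hy0.2⟩).mono_of_mem_nhdsWithin ?_
  refine mem_nhdsWithin.mpr ⟨Ioi t, isOpen_Ioi, hty0, ?_⟩
  rintro u ⟨hu1, hu2⟩
  exact ⟨le_of_lt hu1, hu2.2⟩


private lemma aux_lin_bound {σ : ℝ → ℝ} (hσc : ContinuousOn σ (Ici 0))
    (hσ0 : σ 0 = 0) (hσnonneg : ∀ l ∈ Ici (0:ℝ), 0 ≤ σ l)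
    (hσne : ∀ l : ℝ, 0 < l → σ l ≠ 0)
    (hσdiff : DifferentiableWithinAt ℝ σ (Ici 0) 0)
    (hσ' : 0 < derivWithin σ (Ici 0) 0) {z : ℝ} (hz : 0 < z) :
    ∃ c > 0, ∀ l ∈ Ioc (0:ℝ) z, c * l ≤ σ l := by
  set s := derivWithin σ (Ici 0) 0 with hs
  have hder : HasDerivWithinAt σ s (Ici 0) 0 := hσdiff.hasDerivWithinAt
  have hslope : Tendsto (slope σ 0) (𝓝[>] 0) (𝓝 s) := by
    have := hasDerivWithinAt_iff_tendsto_slope.mp hder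
    rwa [Ici_sdiff_left] at this
  have hev : ∀ᶠ l in 𝓝[>] (0:ℝ), s / 2 < slope σ 0 l :=
    hslope.eventually (eventually_gt_nhds (half_lt_self hσ'))
  obtain ⟨δ, hδ, hδs⟩ := mem_nhdsGT_iff_exists_Ioo_subset.mp hev
  have hδ0 : (0:ℝ) < δ := hδ
  set δ' := min δ z with hδ'
  have hδ'0 : 0 < δ' := lt_min hδ0 hz
  have hδ'z : δ' ≤ z := min_le_right _ _
  have hsub : Icc δ' z ⊆ Ici (0:ℝ) := fun u hu => le_trans hδ'0.le hu.1
  obtain ⟨l0, hl0mem, hl0min⟩ :=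
    isCompact_Icc.exists_isMinOn (nonempty_Icc.mpr hδ'z) (hσc.mono hsub)
  have hc1 : 0 < σ l0 :=
    lt_of_le_of_ne (hσnonneg l0 (hsub hl0mem)) (Ne.symm (hσne l0 (lt_of_lt_of_le hδ'0 hl0mem.1)))
  refine ⟨min (s / 2) (σ l0 / z), lt_min (half_pos hσ') (div_pos hc1 hz), ?_⟩
  intro l hl
  rcases lt_or_ge l δ' with h | h
  · have hmem : l ∈ Ioo 0 δ := ⟨hl.1, lt_of_lt_of_le h (min_le_left _ _)⟩
    have h1 : s / 2 < slope σ 0 l := hδs hmem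
    have hsl : slope σ 0 l = σ l / l := by
      simp [slope_def_field, hσ0]
    rw [hsl] at h1
    have h2 : s / 2 * l < σ l := (lt_div_iff₀ hl.1).mp h1
    calc min (s / 2) (σ l0 / z) * l ≤ s / 2 * l :=
          mul_le_mul_of_nonneg_right (min_le_left _ _) hl.1.le
      _ ≤ σ l := h2.le
  · have hmem : l ∈ Icc δ' z := ⟨h, hl.2⟩
    calc min (s / 2) (σ l0 / z) * l ≤ σ l0 / z * l :=
          mul_le_mul_of_nonneg_right (min_le_right _ _) hl.1.le
      _ ≤ σ l0 / z * z := by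
          apply mul_le_mul_of_nonneg_left hl.2 (div_pos hc1 hz).le
      _ = σ l0 := div_mul_cancel₀ _ hz.ne'
      _ ≤ σ l := hl0min hmem


private lemma aux_contAt_div {g σ : ℝ → ℝ} (hgc : ContinuousOn g (Ici 0))
    (hσc : ContinuousOn σ (Ici 0)) (hσne : ∀ l : ℝ, 0 < l → σ l ≠ 0) :
    ∀ l : ℝ, 0 < l → ContinuousAt (fun u => g u / σ u ^ 2) l := by
  intro l hl
  have hmem : Ici (0:ℝ) ∈ 𝓝 l := Ici_mem_nhds hl
  exact ((hgc.continuousAt hmem).div ((hσc.continuousAt hmem).pow 2)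
    (pow_ne_zero 2 (hσne l hl)))

private lemma aux_intInt {g σ : ℝ → ℝ} (hgc : ContinuousOn g (Ici 0))
    (hσc : ContinuousOn σ (Ici 0)) (hσne : ∀ l : ℝ, 0 < l → σ l ≠ 0)
    {y z : ℝ} (hy : 0 < y) (hyz : y ≤ z) :
    IntervalIntegrable (fun u => g u / σ u ^ 2) volume y z := by
  apply ContinuousOn.intervalIntegrable
  rw [uIcc_of_le hyz]
  exact fun l hl =>
    ((aux_contAt_div hgc hσc hσne) l (lt_of_lt_of_le hy hl.1)).continuousWithinAt

/-- Splitting of the inner integral. -/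
private lemma aux_split {b1 b2 σ : ℝ → ℝ} (hb1c : ContinuousOn b1 (Ici 0))
    (hb2c : ContinuousOn b2 (Ici 0)) (hσc : ContinuousOn σ (Ici 0))
    (hσne : ∀ l : ℝ, 0 < l → σ l ≠ 0) {y z : ℝ} (hy : 0 < y) (hyz : y ≤ z) (ε : ℝ) :
    (∫ l in y..z, (ε * b1 l - b2 l) / σ l ^ 2) =
      ε * (∫ l in y..z, b1 l / σ l ^ 2) - ∫ l in y..z, b2 l / σ l ^ 2 := by
  rw [← intervalIntegral.integral_const_mul,
    ← intervalIntegral.integral_sub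
      ((aux_intInt hb1c hσc hσne hy hyz).const_mul ε) (aux_intInt hb2c hσc hσne hy hyz)]
  apply intervalIntegral.integral_congr
  intro l _
  simp only []
  rw [mul_div_assoc', div_sub_div_same]

private lemma aux_inner_bound {b1 b2 σ : ℝ → ℝ} (hb1c : ContinuousOn b1 (Ici 0))
    (hb2c : ContinuousOn b2 (Ici 0)) (hσc : ContinuousOn σ (Ici 0))
    (hσne : ∀ l : ℝ, 0 < l → σ l ≠ 0)
    {M : ℝ} (hM : ∀ l ∈ Ici (0:ℝ), b1 l ≤ M) (hM0 : 0 < M)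
    (hb2nonneg : ∀ l ∈ Ici (0:ℝ), 0 ≤ b2 l)
    {c : ℝ} (hc0 : 0 < c) {z : ℝ} (hc : ∀ l ∈ Ioc (0:ℝ) z, c * l ≤ σ l)
    {ε y : ℝ} (hε : 0 < ε) (hεy : ε ≤ y) (hyz : y ≤ z) :
    (∫ l in y..z, (ε * b1 l - b2 l) / σ l ^ 2) ≤ M / c ^ 2 := by
  have hy0 : 0 < y := lt_of_lt_of_le hε hεy
  have hgc : ContinuousOn (fun l => ε * b1 l - b2 l) (Ici 0) :=
    (continuousOn_const.mul hb1c).sub hb2c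
  have hint1 : IntervalIntegrable (fun l => (ε * b1 l - b2 l) / σ l ^ 2) volume y z :=
    aux_intInt hgc hσc hσne hy0 hyz
  have hint2 : IntervalIntegrable (fun l => ε * M / (c * l) ^ 2) volume y z := by
    apply ContinuousOn.intervalIntegrable
    rw [uIcc_of_le hyz]
    intro l hl
    have hl0 : 0 < l := lt_of_lt_of_le hy0 hl.1
    exact (continuousOn_const.div ((continuousOn_const.mul continuousOn_id).pow 2)
      (fun u hu => pow_ne_zero 2 (mul_ne_zero hc0.ne' (lt_of_lt_of_le hy0 hu.1).ne'))) l hl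
  have hmono : (∫ l in y..z, (ε * b1 l - b2 l) / σ l ^ 2) ≤
      ∫ l in y..z, ε * M / (c * l) ^ 2 := by
    apply intervalIntegral.integral_mono_on hyz hint1 hint2
    intro l hl
    have hl0 : 0 < l := lt_of_lt_of_le hy0 hl.1
    have h1 : ε * b1 l - b2 l ≤ ε * M := by
      have := hM l hl0.le
      have := hb2nonneg l hl0.le
      nlinarith
    have h2 : (c * l) ^ 2 ≤ σ l ^ 2 := by
      apply pow_le_pow_left₀ (by positivity)
      exact hc l ⟨hl0, hl.2⟩
    exact div_le_div₀ (by positivity) h1 (by positivity) h2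
  have hcalc : (∫ l in y..z, ε * M / (c * l) ^ 2) = ε * M / c ^ 2 * (y⁻¹ - z⁻¹) := by
    have heq : (fun l : ℝ => ε * M / (c * l) ^ 2) =
        fun l : ℝ => ε * M / c ^ 2 * l ^ (-2 : ℤ) := by
      funext l
      rcases eq_or_ne l 0 with rfl | hl
      · norm_num
      · rw [zpow_neg, zpow_two, mul_pow]
        field_simp
    have h0 : (0:ℝ) ∉ uIcc y z := by
      rw [uIcc_of_le hyz]
      intro h
      exact absurd h.1 (not_le.mpr hy0)
    rw [heq, intervalIntegral.integral_const_mul,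
      integral_zpow (Or.inr ⟨by norm_num, h0⟩)]
    congr 1
    norm_num
    ring
  have hfin : ε * M / c ^ 2 * (y⁻¹ - z⁻¹) ≤ M / c ^ 2 := by
    have hz0 : 0 < z := lt_of_lt_of_le hy0 hyz
    have h1 : y⁻¹ - z⁻¹ ≤ y⁻¹ := by
      have : 0 ≤ z⁻¹ := by positivity
      linarith
    have h2 : ε * M / c ^ 2 * (y⁻¹ - z⁻¹) ≤ ε * M / c ^ 2 * y⁻¹ :=
      mul_le_mul_of_nonneg_left h1 (by positivity)
    have h3 : ε * y⁻¹ ≤ 1 := by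
      rw [← div_eq_mul_inv]
      exact (div_le_one hy0).mpr hεy
    calc ε * M / c ^ 2 * (y⁻¹ - z⁻¹) ≤ ε * M / c ^ 2 * y⁻¹ := h2
      _ = M / c ^ 2 * (ε * y⁻¹) := by ring
      _ ≤ M / c ^ 2 * 1 := mul_le_mul_of_nonneg_left h3 (by positivity)
      _ = M / c ^ 2 := mul_one _
  linarith [hmono, hcalc.le, hfin, hcalc.ge]

/-- (Proposition 4.9 — limit of the hitting probability from a fixed starting point.) For all
`0 < x < z`:
`lim_{ε→0⁺} (∫_x^z g_ε(y) dy)/(∫_ε^z g_ε(y) dy)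
  = (∫_x^z exp(−∫_y^z b₂/σ² dl) dy)/(∫_0^z exp(−∫_y^z b₂/σ² dl) dy)`. -/
theorem statement6
    (b1 b2 σ : ℝ → ℝ)
    (hb1 : ContDiffOn ℝ 1 b1 (Ici 0))
    (hb1inf : ∃ m > 0, ∀ x ∈ Ici (0 : ℝ), m ≤ b1 x)
    (hb1sup : ∃ M : ℝ, ∀ x ∈ Ici (0 : ℝ), b1 x ≤ M)
    (hb2 : ContDiffOn ℝ 2 b2 (Ici 0))
    (hb2nonneg : ∀ x ∈ Ici (0 : ℝ), 0 ≤ b2 x)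
    (hb20 : b2 0 = 0)
    (hb2' : 0 < derivWithin b2 (Ici 0) 0)
    (hσ : ContDiffOn ℝ 2 σ (Ici 0))
    (hσnonneg : ∀ x ∈ Ici (0 : ℝ), 0 ≤ σ x)
    (hσzero : ∀ x ∈ Ici (0 : ℝ), (σ x = 0 ↔ x = 0))
    (hσ' : 0 < derivWithin σ (Ici 0) 0)
    (x z : ℝ) (hx : 0 < x) (hxz : x < z) :
    Tendsto
      (fun ε : ℝ =>
        (∫ y in x..z, Real.exp (∫ l in y..z, (ε * b1 l - b2 l) / σ l ^ 2)) /
          (∫ y in ε..z, Real.exp (∫ l in y..z, (ε * b1 l - b2 l) / σ l ^ 2)))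
      (𝓝[>] (0 : ℝ))
      (𝓝 ((∫ y in x..z, Real.exp (-∫ l in y..z, b2 l / σ l ^ 2)) /
        (∫ y in (0 : ℝ)..z, Real.exp (-∫ l in y..z, b2 l / σ l ^ 2)))) := by
  obtain ⟨m, hm0, hm⟩ := hb1inf
  obtain ⟨M, hM⟩ := hb1sup
  have h00 : (0:ℝ) ∈ Ici (0:ℝ) := self_mem_Ici
  have hM0 : 0 < M := lt_of_lt_of_le hm0 (le_trans (hm 0 h00) (hM 0 h00))
  have hz : 0 < z := hx.trans hxz
  have hb1c : ContinuousOn b1 (Ici 0) := hb1.continuousOn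
  have hb2c : ContinuousOn b2 (Ici 0) := hb2.continuousOn
  have hσc : ContinuousOn σ (Ici 0) := hσ.continuousOn
  have hσ0 : σ 0 = 0 := (hσzero 0 h00).mpr rfl
  have hσne : ∀ l : ℝ, 0 < l → σ l ≠ 0 := by
    intro l hl h0
    exact hl.ne' ((hσzero l hl.le).mp h0)
  have hσdiff : DifferentiableWithinAt ℝ σ (Ici 0) 0 :=
    (hσ.differentiableOn (by norm_num)) 0 h00
  obtain ⟨c, hc0, hc⟩ := aux_lin_bound hσc hσ0 hσnonneg hσne hσdiff hσ' hz
  set K := Real.exp (M / c ^ 2) with hK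
  set g0 : ℝ → ℝ := fun y => Real.exp (-∫ l in y..z, b2 l / σ l ^ 2) with hg0
  set F : ℝ → ℝ → ℝ :=
    fun ε y => Real.exp (∫ l in y..z, (ε * b1 l - b2 l) / σ l ^ 2) with hF
  have hsumc : ∀ ε : ℝ, ContinuousOn (fun l => ε * b1 l - b2 l) (Ici 0) := fun ε =>
    (continuousOn_const.mul hb1c).sub hb2c
  have contF : ∀ ε : ℝ, ContinuousOn (F ε) (Ioc 0 z) := fun ε =>
    Real.continuous_exp.comp_continuousOn
      (aux_primitive_cont hz (aux_contAt_div (hsumc ε) hσc hσne))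
  have hg0F : g0 = F 0 := by
    funext y
    simp only [hF, hg0]
    rw [← intervalIntegral.integral_neg]
    congr 1
    apply intervalIntegral.integral_congr
    intro l _
    simp only []
    rw [zero_mul, zero_sub, neg_div]
  have hptwise : ∀ y : ℝ, 0 < y → y ≤ z →
      Tendsto (fun ε => F ε y) (𝓝[>] (0:ℝ)) (𝓝 (g0 y)) := by
    intro y hy0 hyz
    have hsplit : ∀ ε : ℝ,
        Real.exp (ε * (∫ l in y..z, b1 l / σ l ^ 2) - ∫ l in y..z, b2 l / σ l ^ 2)
          = F ε y := by
      intro ε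
      simp only [hF]
      rw [aux_split hb1c hb2c hσc hσne hy0 hyz]
    have hcont : Continuous fun ε : ℝ =>
        Real.exp (ε * (∫ l in y..z, b1 l / σ l ^ 2) - ∫ l in y..z, b2 l / σ l ^ 2) :=
      Real.continuous_exp.comp ((continuous_id.mul continuous_const).sub continuous_const)
    have h0 : Real.exp ((0:ℝ) * (∫ l in y..z, b1 l / σ l ^ 2)
        - ∫ l in y..z, b2 l / σ l ^ 2) = g0 y := by
      simp only [hg0, zero_mul, zero_sub]
    refine Tendsto.congr hsplit ?_
    rw [← h0]
    exact (hcont.tendsto 0).mono_left nhdsWithin_le_nhds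
  -- numerator
  have tN : Tendsto (fun ε => ∫ y in Ioc x z, F ε y) (𝓝[>] (0:ℝ))
      (𝓝 (∫ y in Ioc x z, g0 y)) := by
    apply MeasureTheory.tendsto_integral_filter_of_dominated_convergence (fun _ => K)
    · apply Eventually.of_forall
      intro ε
      exact ((contF ε).mono (Ioc_subset_Ioc_left hx.le)).aestronglyMeasurable
        measurableSet_Ioc
    · filter_upwards [Ioo_mem_nhdsGT_of_mem (left_mem_Ico.mpr hx)] with ε hε
      refine (ae_restrict_mem measurableSet_Ioc).mono fun y hy => ?_
      have hb := aux_inner_bound hb1c hb2c hσc hσne hM hM0 hb2nonneg hc0 hc hε.1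
        (le_of_lt (hε.2.trans hy.1)) hy.2
      simp only [hF, Real.norm_eq_abs, Real.abs_exp, hK]
      exact Real.exp_le_exp.mpr hb
    · exact integrableOn_const measure_Ioc_lt_top.ne
    · refine (ae_restrict_mem measurableSet_Ioc).mono fun y hy => ?_
      exact hptwise y (hx.trans hy.1) hy.2
  have tN' : Tendsto (fun ε => ∫ y in x..z, F ε y) (𝓝[>] (0:ℝ))
      (𝓝 (∫ y in x..z, g0 y)) := by
    rw [intervalIntegral.integral_of_le hxz.le]
    exact tN.congr fun ε => (intervalIntegral.integral_of_le hxz.le).symm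
  -- denominator
  have tD0 : Tendsto (fun ε => ∫ y in Ioc 0 z, (Ioc ε z).indicator (F ε) y)
      (𝓝[>] (0:ℝ)) (𝓝 (∫ y in Ioc 0 z, g0 y)) := by
    apply MeasureTheory.tendsto_integral_filter_of_dominated_convergence (fun _ => K)
    · apply Eventually.of_forall
      intro ε
      exact ((contF ε).aestronglyMeasurable measurableSet_Ioc).indicator measurableSet_Ioc
    · filter_upwards [Ioo_mem_nhdsGT_of_mem (left_mem_Ico.mpr hz)] with ε hε
      apply ae_of_all
      intro y
      by_cases hy : y ∈ Ioc ε z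
      · rw [Set.indicator_of_mem hy]
        have hb := aux_inner_bound hb1c hb2c hσc hσne hM hM0 hb2nonneg hc0 hc hε.1
          hy.1.le hy.2
        simp only [hF, Real.norm_eq_abs, Real.abs_exp, hK]
        exact Real.exp_le_exp.mpr hb
      · rw [Set.indicator_of_notMem hy]
        simp only [norm_zero, hK]
        exact (Real.exp_pos _).le
    · exact integrableOn_const measure_Ioc_lt_top.ne
    · refine (ae_restrict_mem measurableSet_Ioc).mono fun y hy => ?_
      have hev : ∀ᶠ ε in 𝓝[>] (0:ℝ), F ε y = (Ioc ε z).indicator (F ε) y := by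
        filter_upwards [Ioo_mem_nhdsGT_of_mem (left_mem_Ico.mpr hy.1)] with ε hε
        have hmem : y ∈ Ioc ε z := ⟨hε.2, hy.2⟩
        exact (Set.indicator_of_mem hmem _).symm
      exact Tendsto.congr' hev (hptwise y hy.1 hy.2)
  have tD : Tendsto (fun ε => ∫ y in ε..z, F ε y) (𝓝[>] (0:ℝ))
      (𝓝 (∫ y in (0:ℝ)..z, g0 y)) := by
    rw [intervalIntegral.integral_of_le hz.le]
    apply tD0.congr'
    filter_upwards [Ioo_mem_nhdsGT_of_mem (left_mem_Ico.mpr hz)] with ε hε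
    rw [MeasureTheory.setIntegral_indicator measurableSet_Ioc, Set.Ioc_inter_Ioc,
      max_eq_right hε.1.le, min_self, intervalIntegral.integral_of_le hε.2.le]
  -- positivity of the limiting denominator
  have hg0int : IntervalIntegrable g0 volume 0 z := by
    rw [intervalIntegrable_iff, uIoc_of_le hz.le]
    apply Integrable.mono' (g := fun _ => (1:ℝ))
      (integrableOn_const measure_Ioc_lt_top.ne)
    · rw [hg0F]
      exact (contF 0).aestronglyMeasurable measurableSet_Ioc
    · refine (ae_restrict_mem measurableSet_Ioc).mono fun y hy => ?_
      simp only [hg0, Real.norm_eq_abs, Real.abs_exp]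
      rw [Real.exp_le_one_iff, neg_nonpos]
      apply intervalIntegral.integral_nonneg hy.2
      intro u hu
      exact div_nonneg (hb2nonneg u (le_trans hy.1.le hu.1)) (sq_nonneg _)
  have hD0 : 0 < ∫ y in (0:ℝ)..z, g0 y :=
    intervalIntegral.intervalIntegral_pos_of_pos_on hg0int
      (fun y _ => Real.exp_pos _) hz
  exact tN'.div tD hD0.ne'
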